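/- Products of causal spaces are causal spaces: given causal spaces 𝒞¹=(Ω¹,ℋ¹,ℙ¹,𝕂¹) and 𝒞²=(Ω²,ℋ²,ℙ²,𝕂²), the quadruple (Ω¹×Ω², ℋ¹⊗ℋ², ℙ¹⊗ℙ², 𝕂¹⊗𝕂²), where the product causal mechanism assigns to S¹∪S² the product kernel K¹_{S¹}⊗K²_{S²}, satisfies both axioms of a causal space: (i) the kernel indexed by the empty set equals ℙ¹⊗ℙ²; (ii) for all ω, all A ∈ ℋ¹_{S¹}⊗ℋ²_{S²} and all B ∈ ℋ¹⊗ℋ², the kernel satisfies K(ω, A∩B) = 𝟙_A(ω)·K(ω,B). -/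

import Mathlib

open MeasureTheory

/-- A causal space (Park et al.): a probability space `(Ω, ℋ, ℙ)` on a product measurable
space together with a family of sub-σ-algebras `ℋ_S` indexed by subsets `S` of the index set
`T`, and a causal mechanism `𝕂 = {K_S}`, where each `K_S` is a transition probability kernel
from `(Ω, ℋ_S)` into `(Ω, ℋ)` satisfying the two causal space axioms. -/
structure CausalSpace (T : Type*) (Ω : Type*) [mΩ : MeasurableSpace Ω] where
  /-- the sub-σ-algebra `ℋ_S` generated by the coordinates in `S` -/
  H : Set T → MeasurableSpace Ω
  H_le : ∀ S, H S ≤ mΩ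
  H_empty : H ∅ = ⊥
  H_univ : H Set.univ = mΩ
  H_mono : ∀ {S U : Set T}, S ⊆ U → H S ≤ H U
  /-- the probability measure -/
  P : Measure Ω
  P_prob : IsProbabilityMeasure P
  /-- the causal mechanism: `K S ω` is the measure `K_S(ω, ·)` -/
  K : Set T → Ω → Measure Ω
  K_prob : ∀ S ω, IsProbabilityMeasure (K S ω)
  K_meas : ∀ (S : Set T) {A : Set Ω}, MeasurableSet A → Measurable[H S] fun ω => K S ω A
  K_empty : ∀ (ω : Ω) {A : Set Ω}, MeasurableSet A → K ∅ ω A = P A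
  K_inter : ∀ (S : Set T) (ω : Ω) {A B : Set Ω}, MeasurableSet[H S] A → MeasurableSet B →
    K S ω (A ∩ B) = A.indicator (fun _ => (1 : ENNReal)) ω * K S ω B

/-- In a causal space, `K_S(ω, A) = 𝟙_A(ω)` for `A ∈ ℋ_S`. -/
lemma CausalSpace.K_indicator {T Ω : Type*} [MeasurableSpace Ω] (C : CausalSpace T Ω)
    (S : Set T) (ω : Ω) {A : Set Ω} (hA : MeasurableSet[C.H S] A) :
    C.K S ω A = A.indicator (fun _ => (1 : ENNReal)) ω := by
  have h := C.K_inter S ω hA MeasurableSet.univ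
  have hp := C.K_prob S ω
  simpa [Set.inter_univ, measure_univ] using h


open MeasurableSpace in
/-- If two probability measures act as Dirac indicators on sub-σ-algebras, then so does
their product measure on the product of the sub-σ-algebras. -/
lemma prod_indicator_of_sub {Ω1 Ω2 : Type*}
    (m1 : MeasurableSpace Ω1) (m2 : MeasurableSpace Ω2)
    [mΩ1 : MeasurableSpace Ω1] [mΩ2 : MeasurableSpace Ω2] (h1le : m1 ≤ mΩ1) (h2le : m2 ≤ mΩ2)
    (μ1 : Measure Ω1) (μ2 : Measure Ω2) [IsProbabilityMeasure μ1] [IsProbabilityMeasure μ2]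
    [SFinite μ2] (ω : Ω1 × Ω2)
    (h1 : ∀ ⦃s : Set Ω1⦄, MeasurableSet[m1] s → μ1 s = s.indicator (fun _ => (1 : ENNReal)) ω.1)
    (h2 : ∀ ⦃t : Set Ω2⦄, MeasurableSet[m2] t → μ2 t = t.indicator (fun _ => (1 : ENNReal)) ω.2) :
    ∀ ⦃A : Set (Ω1 × Ω2)⦄, MeasurableSet[m1.prod m2] A →
      μ1.prod μ2 A = A.indicator (fun _ => (1 : ENNReal)) ω := by
  classical
  have heq : m1.prod m2 = MeasurableSpace.generateFrom
      (Set.image2 (· ×ˢ ·) { s : Set Ω1 | MeasurableSet[m1] s }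
        { t : Set Ω2 | MeasurableSet[m2] t }) :=
    (@generateFrom_prod Ω1 Ω2 m1 m2).symm
  have hpi := @isPiSystem_prod Ω1 Ω2 m1 m2
  have hle : m1.prod m2 ≤ (Prod.instMeasurableSpace : MeasurableSpace (Ω1 × Ω2)) :=
    sup_le_sup (MeasurableSpace.comap_mono h1le) (MeasurableSpace.comap_mono h2le)
  refine @MeasurableSpace.induction_on_inter (Ω1 × Ω2) (m1.prod m2) _ _ heq hpi ?_ ?_ ?_ ?_
  · simp
  · rintro _ ⟨s, hs, t, ht, rfl⟩
    rw [Measure.prod_prod, h1 hs, h2 ht]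
    by_cases hω1 : ω.1 ∈ s <;> by_cases hω2 : ω.2 ∈ t <;>
      simp [Set.indicator_apply, Set.mem_prod, hω1, hω2]
  · intro t htm ht
    rw [measure_compl (hle t htm) (measure_ne_top _ t), ht, measure_univ]
    by_cases hω : ω ∈ t <;> simp [Set.indicator_apply, hω]
  · intro f hdisj hmeas hf
    rw [measure_iUnion hdisj (fun i => hle _ (hmeas i))]
    simp_rw [hf]
    by_cases hω : ω ∈ ⋃ i, f i
    · obtain ⟨j, hj⟩ := Set.mem_iUnion.mp hω
      rw [tsum_eq_single j (fun i hij => by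
        have : ω ∉ f i := fun h => Set.disjoint_left.mp (hdisj hij) h hj
        simp [Set.indicator_apply, this])]
      simp [Set.indicator_apply, hj, hω]
    · have h0 : ∀ i, ω ∉ f i := fun i h => hω (Set.mem_iUnion.mpr ⟨i, h⟩)
      simp [Set.indicator_apply, h0, hω]

/-- Products of causal spaces are causal spaces.  For causal spaces
`𝒞¹ = (Ω¹, ℋ¹, ℙ¹, 𝕂¹)` (index set `T¹`) and `𝒞² = (Ω², ℋ², ℙ², 𝕂²)` (index set `T²`),
the product causal mechanism assigns to `S ⊆ T¹ ⊕ T²` (decomposed as `S¹ ∪ S²`) the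
product kernel `K¹_{S¹} ⊗ K²_{S²}`, and this quadruple satisfies both causal space axioms:
(i) the kernel indexed by `∅` equals `ℙ¹ ⊗ ℙ²`; (ii) `K(ω, A ∩ B) = 𝟙_A(ω) · K(ω, B)`
for `A ∈ ℋ¹_{S¹} ⊗ ℋ²_{S²}` and `B ∈ ℋ¹ ⊗ ℋ²`. -/
theorem product_causal_space_is_causal_space {T1 T2 Ω1 Ω2 : Type*}
    [MeasurableSpace Ω1] [MeasurableSpace Ω2]
    (C1 : CausalSpace T1 Ω1) (C2 : CausalSpace T2 Ω2) :
    -- axiom (i): the kernel indexed by the empty set equals ℙ¹ ⊗ ℙ²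
    (∀ ω : Ω1 × Ω2, ∀ A : Set (Ω1 × Ω2), MeasurableSet A →
      (C1.K ∅ ω.1).prod (C2.K ∅ ω.2) A = (C1.P.prod C2.P) A) ∧
    -- axiom (ii)
    (∀ S : Set (T1 ⊕ T2), ∀ ω : Ω1 × Ω2, ∀ A B : Set (Ω1 × Ω2),
      MeasurableSet[(C1.H (Sum.inl ⁻¹' S)).prod (C2.H (Sum.inr ⁻¹' S))] A →
      MeasurableSet B →
      (C1.K (Sum.inl ⁻¹' S) ω.1).prod (C2.K (Sum.inr ⁻¹' S) ω.2) (A ∩ B)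
        = A.indicator (fun _ => (1 : ENNReal)) ω
          * (C1.K (Sum.inl ⁻¹' S) ω.1).prod (C2.K (Sum.inr ⁻¹' S) ω.2) B) := by
  constructor
  · -- axiom (i)
    intro ω A _
    have h1 : C1.K ∅ ω.1 = C1.P := by
      ext s hs; exact C1.K_empty ω.1 hs
    have h2 : C2.K ∅ ω.2 = C2.P := by
      ext s hs; exact C2.K_empty ω.2 hs
    rw [h1, h2]
  · -- axiom (ii)
    intro S ω A B hA hB
    set S1 := Sum.inl ⁻¹' S
    set S2 := Sum.inr ⁻¹' S
    have hκ1 := C1.K_prob S1 ω.1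
    have hκ2 := C2.K_prob S2 ω.2
    set μ : Measure (Ω1 × Ω2) := (C1.K S1 ω.1).prod (C2.K S2 ω.2) with hμ
    have hμprob : IsProbabilityMeasure μ := by
      rw [hμ]; infer_instance
    -- key: μ agrees with the Dirac indicator on the product sub-σ-algebra
    have key : ∀ ⦃A : Set (Ω1 × Ω2)⦄,
        MeasurableSet[(C1.H S1).prod (C2.H S2)] A →
        μ A = A.indicator (fun _ => (1 : ENNReal)) ω :=
      prod_indicator_of_sub (C1.H S1) (C2.H S2) (C1.H_le S1) (C2.H_le S2)
        (C1.K S1 ω.1) (C2.K S2 ω.2) ω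
        (fun s hs => C1.K_indicator S1 ω.1 hs) (fun t ht => C2.K_indicator S2 ω.2 ht)
    classical
    by_cases hω : ω ∈ A
    · have hAc : μ Aᶜ = 0 := by
        have := key hA.compl
        rw [this, Set.indicator_apply]
        simp [hω]
      have le1 : μ (A ∩ B) ≤ μ B := measure_mono Set.inter_subset_right
      have ge1 : μ B ≤ μ (A ∩ B) := by
        calc μ B = μ ((A ∩ B) ∪ (Aᶜ ∩ B)) := by
              congr 1
              rw [← Set.union_inter_distrib_right, Set.union_compl_self, Set.univ_inter]
          _ ≤ μ (A ∩ B) + μ (Aᶜ ∩ B) := measure_union_le _ _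
          _ ≤ μ (A ∩ B) + μ Aᶜ := by
              gcongr; exact Set.inter_subset_left
          _ = μ (A ∩ B) := by rw [hAc, add_zero]
      rw [le_antisymm le1 ge1, Set.indicator_apply]
      simp [hω]
    · have hA0 : μ A = 0 := by
        rw [key hA, Set.indicator_apply]; simp [hω]
      have : μ (A ∩ B) = 0 :=
        le_antisymm ((measure_mono Set.inter_subset_left).trans hA0.le) zero_le
      rw [this, Set.indicator_apply]
      simp [hω]
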